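/- Let n and N be positive integers and let c ≥ 2 be a real number such that cn and N/c are positive integers. Let G be a bipartite graph on N vertices whose edge set is the union of N/c pairwise edge-disjoint induced matchings of G, each of size cn. Then G →_ind (K_{1,n}, M_n): every red/blue coloring of the edges of G contains an induced copy of the star K_{1,n} all of whose edges are red, or an induced copy of the matching M_n all of whose edges are blue. -/

import Mathlib

/-- The star `K_{1,t}` with `t` edges: center `0` and `t` leaves. -/
def starGraph (t : ℕ) : SimpleGraph (Fin (t + 1)) :=
  SimpleGraph.fromRel (fun i j => i = 0 ∧ j ≠ 0)

/-- The matching `M_n` with `n` edges (`n` disjoint edges on `2n` vertices). -/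
def matchingGraph (n : ℕ) : SimpleGraph (Fin n × Fin 2) :=
  SimpleGraph.fromRel (fun a b => a.1 = b.1 ∧ a.2 ≠ b.2)

/-- `φ` is an induced copy of `H` in `G`: `φ` is injective and `φ(u)φ(v)` is an edge of
`G` if and only if `uv` is an edge of `H`. -/
def IsInducedCopy {α β : Type*} (H : SimpleGraph α) (G : SimpleGraph β) (φ : α → β) : Prop :=
  Function.Injective φ ∧ ∀ u v, H.Adj u v ↔ G.Adj (φ u) (φ v)

/-- `G →_ind (H₁, H₂)`: every red/blue coloring of the edges of `G` contains an induced
copy of `H₁` all of whose edges are red (`true`), or an induced copy of `H₂` all of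
whose edges are blue (`false`). -/
def ArrowsInd {V α β : Type*} (G : SimpleGraph V) (H₁ : SimpleGraph α)
    (H₂ : SimpleGraph β) : Prop :=
  ∀ c : Sym2 V → Bool,
    (∃ φ : α → V, IsInducedCopy H₁ G φ ∧ ∀ u v, H₁.Adj u v → c s(φ u, φ v) = true) ∨
    (∃ ψ : β → V, IsInducedCopy H₂ G ψ ∧ ∀ u v, H₂.Adj u v → c s(ψ u, ψ v) = false)

/-- `M` is an induced matching of `G`: a set of edges of `G` with pairwise disjoint
endpoints such that every edge of `G` whose endpoints are covered by `M` belongs to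
`M`. -/
def IsInducedMatchingSet {V : Type*} (G : SimpleGraph V) (M : Set (Sym2 V)) : Prop :=
  M ⊆ G.edgeSet ∧
  (∀ e ∈ M, ∀ f ∈ M, e ≠ f → ∀ v, v ∈ e → v ∉ f) ∧
  (∀ e ∈ G.edgeSet, (∀ v ∈ e, ∃ f ∈ M, v ∈ f) → e ∈ M)

lemma star_copy {V : Type*} (G : SimpleGraph V) (n : ℕ) (col : Sym2 V → Bool)
    (A : Finset V) (hbip : ∀ u v, G.Adj u v → (u ∈ A ↔ v ∉ A))
    (v : V) (L : Finset V) (hL : L.card = n)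
    (hadj : ∀ u ∈ L, G.Adj v u ∧ col s(v, u) = true) :
    ∃ φ : Fin (n+1) → V, IsInducedCopy (starGraph n) G φ ∧
      ∀ u w, (starGraph n).Adj u w → col s(φ u, φ w) = true := by
  classical
  set g : Fin n → V := fun j => (L.equivFin.symm (Fin.cast hL.symm j) : V) with hg
  have hgmem : ∀ j, g j ∈ L := fun j => (L.equivFin.symm (Fin.cast hL.symm j)).2
  have hginj : Function.Injective g := by
    intro a b hab
    have := Subtype.coe_injective hab
    have := L.equivFin.symm.injective this
    simpa [Fin.ext_iff] using congrArg Fin.val this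
  have hvadj : ∀ j, G.Adj v (g j) := fun j => (hadj _ (hgmem j)).1
  have hvne : ∀ j, v ≠ g j := fun j => (hvadj j).ne
  set φ : Fin (n+1) → V := fun i => if h : i = 0 then v else g (i.pred h) with hφ
  have hφ0 : φ 0 = v := by simp [hφ]
  have hadj' : ∀ u w : Fin (n+1), (starGraph n).Adj u w ↔ (u = 0 ∧ w ≠ 0) ∨ (w = 0 ∧ u ≠ 0) := by
    intro u w
    constructor
    · rintro ⟨hne, h | h⟩
      · exact Or.inl h
      · exact Or.inr h
    · rintro (⟨h1, h2⟩ | ⟨h1, h2⟩)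
      · exact ⟨by rintro rfl; exact h2 h1, Or.inl ⟨h1, h2⟩⟩
      · exact ⟨by rintro rfl; exact h2 h1, Or.inr ⟨h1, h2⟩⟩
  have hnonadj : ∀ a b : Fin n, ¬ G.Adj (g a) (g b) := by
    intro a b hab
    have h1 := hbip v (g a) (hvadj a)
    have h2 := hbip v (g b) (hvadj b)
    have h3 := hbip (g a) (g b) hab
    tauto
  refine ⟨φ, ⟨?_, ?_⟩, ?_⟩
  · intro i j hij
    by_cases hi : i = 0 <;> by_cases hj : j = 0
    · rw [hi, hj]
    · have h2 : v = g (j.pred hj) := by simpa [hφ, hi, hj] using hij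
      exact absurd h2 (hvne _)
    · have h2 : v = g (i.pred hi) := by simpa [hφ, hi, hj] using hij.symm
      exact absurd h2 (hvne _)
    · simp only [hφ, hi, hj, dif_neg, not_false_iff] at hij
      have := hginj hij
      rwa [Fin.pred_inj] at this
  · intro u w
    rw [hadj' u w]
    by_cases hu : u = 0 <;> by_cases hw : w = 0
    · simp [hu, hw]
    · subst hu
      simp only [hφ, dif_pos, dif_neg hw]
      constructor
      · intro _; exact hvadj _
      · intro _; tauto
    · subst hw
      simp only [hφ, dif_pos, dif_neg hu]
      constructor
      · intro _; exact (hvadj _).symm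
      · intro _; tauto
    · simp only [hφ, hu, hw, dif_neg, not_false_iff]
      simp [hu, hw, hnonadj]
  · intro u w huw
    rw [hadj' u w] at huw
    rcases huw with ⟨rfl, hw⟩ | ⟨rfl, hu⟩
    · simp only [hφ, dif_pos, dif_neg hw]
      exact (hadj _ (hgmem _)).2
    · simp only [hφ, dif_pos, dif_neg hu]
      rw [Sym2.eq_swap]
      exact (hadj _ (hgmem _)).2

lemma matching_copy {V : Type*} (G : SimpleGraph V) (n : ℕ) (col : Sym2 V → Bool)
    (M : Set (Sym2 V)) (hM : IsInducedMatchingSet G M)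
    (S : Finset (Sym2 V)) (hScard : S.card = n) (hSM : ↑S ⊆ M)
    (hScol : ∀ e ∈ S, col e = false) :
    ∃ ψ : Fin n × Fin 2 → V, IsInducedCopy (matchingGraph n) G ψ ∧
      ∀ u w, (matchingGraph n).Adj u w → col s(ψ u, ψ w) = false := by
  classical
  set E : Fin n → Sym2 V := fun j => (S.equivFin.symm (Fin.cast hScard.symm j) : Sym2 V) with hE
  have hEmem : ∀ j, E j ∈ S := fun j => (S.equivFin.symm (Fin.cast hScard.symm j)).2
  have hEinj : Function.Injective E := by
    intro a b hab
    have := Subtype.coe_injective hab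
    have := S.equivFin.symm.injective this
    simpa [Fin.ext_iff] using congrArg Fin.val this
  have hEM : ∀ j, E j ∈ M := fun j => hSM (hEmem j)
  have hrep0 : ∀ e : Sym2 V, e ∈ G.edgeSet → ∃ q : V × V, e = s(q.1, q.2) ∧ G.Adj q.1 q.2 := by
    intro e
    induction e using Sym2.ind with
    | _ x y => exact fun h => ⟨(x, y), rfl, h⟩
  have hrep : ∀ j : Fin n, ∃ q : V × V, E j = s(q.1, q.2) ∧ G.Adj q.1 q.2 :=
    fun j => hrep0 (E j) (hM.1 (hEM j))
  choose p hp hpadj using hrep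
  set ψ : Fin n × Fin 2 → V := fun q => if q.2 = 0 then (p q.1).1 else (p q.1).2 with hψ
  have hψ0 : ∀ i, ψ (i, 0) = (p i).1 := by intro i; simp [hψ]
  have hψ1 : ∀ i, ψ (i, 1) = (p i).2 := by intro i; simp [hψ]
  have hfin2 : ∀ b : Fin 2, b = 0 ∨ b = 1 := by decide
  have hne : ∀ j, (p j).1 ≠ (p j).2 := fun j => (hpadj j).ne
  have hvmem : ∀ (i : Fin n) (b : Fin 2), ψ (i, b) ∈ E i := by
    intro i b
    rcases hfin2 b with rfl | rfl
    · rw [hψ0, hp]; exact Sym2.mem_mk_left _ _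
    · rw [hψ1, hp]; exact Sym2.mem_mk_right _ _
  have hsep : ∀ i j : Fin n, i ≠ j → ∀ v, v ∈ E i → v ∉ E j := by
    intro i j hij v hv
    exact hM.2.1 (E i) (hEM i) (E j) (hEM j) (fun h => hij (hEinj h)) v hv
  have hsame : ∀ q r : Fin n × Fin 2, ψ q = ψ r → q.1 = r.1 := by
    rintro ⟨i, x⟩ ⟨j, y⟩ h
    by_contra hqr
    exact hsep i j hqr (ψ (i, x)) (hvmem i x) (h ▸ hvmem j y)
  have hinj : Function.Injective ψ := by
    rintro ⟨i, x⟩ ⟨j, y⟩ h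
    have hij : i = j := hsame _ _ h
    subst hij
    rcases hfin2 x with rfl | rfl <;> rcases hfin2 y with rfl | rfl
    · rfl
    · rw [hψ0, hψ1] at h; exact absurd h (hne i)
    · rw [hψ0, hψ1] at h; exact absurd h.symm (hne i)
    · rfl
  have hMadj : ∀ q r : Fin n × Fin 2, (matchingGraph n).Adj q r ↔ q.1 = r.1 ∧ q.2 ≠ r.2 := by
    rintro ⟨i, x⟩ ⟨j, y⟩
    constructor
    · rintro ⟨hne', h | h⟩
      · exact h
      · exact ⟨h.1.symm, h.2.symm⟩
    · rintro ⟨h1, h2⟩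
      refine ⟨?_, Or.inl ⟨h1, h2⟩⟩
      intro hh
      exact h2 (congrArg Prod.snd hh)
  have hedgeE : ∀ q r : Fin n × Fin 2, q.1 = r.1 → q.2 ≠ r.2 → s(ψ q, ψ r) = E q.1 := by
    rintro ⟨i, x⟩ ⟨j, y⟩ h1 h2
    dsimp only at h1 h2
    subst h1
    rcases hfin2 x with rfl | rfl <;> rcases hfin2 y with rfl | rfl
    · exact absurd rfl h2
    · rw [hψ0, hψ1, hp]
    · rw [hψ0, hψ1, Sym2.eq_swap, hp]
    · exact absurd rfl h2
  refine ⟨ψ, ⟨hinj, ?_⟩, ?_⟩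
  · intro q r
    rw [hMadj]
    constructor
    · rintro ⟨h1, h2⟩
      have he := hedgeE q r h1 h2
      have : s(ψ q, ψ r) ∈ G.edgeSet := by
        rw [he]; exact hM.1 (hEM q.1)
      exact this
    · intro hadj
      have hmemM : s(ψ q, ψ r) ∈ M := by
        apply hM.2.2 _ hadj
        intro v hv
        rw [Sym2.mem_iff] at hv
        rcases hv with rfl | rfl
        · exact ⟨E q.1, hEM q.1, hvmem q.1 q.2⟩
        · exact ⟨E r.1, hEM r.1, hvmem r.1 r.2⟩
      have heq : s(ψ q, ψ r) = E q.1 := by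
        by_contra hne'
        exact hM.2.1 _ hmemM _ (hEM q.1) hne' (ψ q) (Sym2.mem_mk_left _ _) (hvmem q.1 q.2)
      have heq' : s(ψ q, ψ r) = E r.1 := by
        by_contra hne'
        exact hM.2.1 _ hmemM _ (hEM r.1) hne' (ψ r) (Sym2.mem_mk_right _ _) (hvmem r.1 r.2)
      have h1 : q.1 = r.1 := hEinj (heq ▸ heq')
      refine ⟨h1, fun h2 => ?_⟩
      have : q = r := Prod.ext h1 h2
      rw [this] at hadj
      exact G.loopless.irrefl _ hadj
  · intro q r hqr
    rw [hMadj] at hqr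
    rw [hedgeE q r hqr.1 hqr.2]
    exact hScol _ (hEmem q.1)

/-- **From bipartite Ruzsa–Szemerédi graphs to induced Ramsey.** Let `c ≥ 2` be real
with `s = cn` and `t = N/c` positive integers, and let `G` be a bipartite graph on `N`
vertices whose edge set is the union of `t = N/c` pairwise edge-disjoint induced
matchings, each of size `s = cn`. Then `G →_ind (K_{1,n}, M_n)`. -/
theorem stmt18 {V : Type*} [Fintype V] (G : SimpleGraph V) (n N s t : ℕ)
    (hn : 0 < n) (hN : 0 < N) (c : ℝ) (hc : 2 ≤ c)
    (hs : (s : ℝ) = c * n) (hspos : 0 < s)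
    (ht : (t : ℝ) = (N : ℝ) / c) (htpos : 0 < t)
    (hcard : Fintype.card V = N)
    (A : Finset V) (hbip : ∀ u v, G.Adj u v → (u ∈ A ↔ v ∉ A))
    (Ms : Fin t → Set (Sym2 V))
    (hM : ∀ i, IsInducedMatchingSet G (Ms i) ∧ (Ms i).ncard = s)
    (hdisj : ∀ i j, i ≠ j → Disjoint (Ms i) (Ms j))
    (hcover : G.edgeSet = ⋃ i, Ms i) :
    ArrowsInd G (starGraph n) (matchingGraph n) := by
  classical
  intro col
  by_cases hstar : ∃ v : V, ∃ L : Finset V, L.card = n ∧ ∀ u ∈ L, G.Adj v u ∧ col s(v, u) = true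
  · obtain ⟨v, L, hL, hadjL⟩ := hstar
    exact Or.inl (star_copy G n col A hbip v L hL hadjL)
  by_cases hblue : ∃ i : Fin t, ∃ S : Finset (Sym2 V),
      S.card = n ∧ ↑S ⊆ Ms i ∧ ∀ e ∈ S, col e = false
  · obtain ⟨i, S, h1, h2, h3⟩ := hblue
    exact Or.inr (matching_copy G n col (Ms i) (hM i).1 S h1 h2 h3)
  exfalso
  -- the red graph
  let R : SimpleGraph V := ⟨fun u v => G.Adj u v ∧ col s(u,v) = true,
    ⟨fun u v h => ⟨h.1.symm, by rw [Sym2.eq_swap]; exact h.2⟩⟩,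
    ⟨fun v h => G.loopless.irrefl v h.1⟩⟩
  letI : DecidableRel R.Adj := fun a b => Classical.dec _
  -- every red degree is < n
  have hdeg : ∀ v : V, R.degree v ≤ n - 1 := by
    intro v
    by_contra h
    push_neg at h
    have hnle : n ≤ R.degree v := by omega
    obtain ⟨L, hLsub, hLcard⟩ := Finset.exists_subset_card_eq hnle
    refine hstar ⟨v, L, hLcard, fun u hu => ?_⟩
    have h2 : u ∈ R.neighborFinset v := hLsub hu
    rw [SimpleGraph.mem_neighborFinset] at h2
    exact h2
  have hRedge : 2 * R.edgeFinset.card ≤ N * (n - 1) := by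
    rw [← SimpleGraph.sum_degrees_eq_twice_card_edges R]
    calc ∑ v : V, R.degree v ≤ ∑ _v : V, (n - 1) := Finset.sum_le_sum (fun v _ => hdeg v)
      _ = N * (n - 1) := by rw [Finset.sum_const, Finset.card_univ, hcard, smul_eq_mul]
  -- per-matching red counts
  have hMfin : ∀ i, (Ms i).Finite := fun i => Set.toFinite _
  let F : Fin t → Finset (Sym2 V) := fun i => (hMfin i).toFinset
  have hFmem : ∀ i e, e ∈ F i ↔ e ∈ Ms i := fun i e => (hMfin i).mem_toFinset
  have hFcard : ∀ i, (F i).card = s := by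
    intro i
    rw [← (hM i).2, Set.ncard_eq_toFinset_card (Ms i) (hMfin i)]
  let Red : Fin t → Finset (Sym2 V) := fun i => (F i).filter (fun e => col e = true)
  have hBlue : ∀ i, ((F i).filter (fun e => ¬ col e = true)).card ≤ n - 1 := by
    intro i
    by_contra h
    rw [not_le] at h
    have hnle : n ≤ ((F i).filter (fun e => ¬ col e = true)).card := by omega
    obtain ⟨S, hSsub, hScard⟩ := Finset.exists_subset_card_eq hnle
    refine hblue ⟨i, S, hScard, ?_, ?_⟩
    · intro e he
      have := hSsub he
      rw [Finset.mem_filter, hFmem] at this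
      exact this.1
    · intro e he
      have := hSsub he
      rw [Finset.mem_filter] at this
      exact Bool.eq_false_iff.mpr this.2
  have hRedcard : ∀ i, s - (n - 1) ≤ (Red i).card := by
    intro i
    have hsplit : ((F i).filter (fun e => col e = true)).card
        + ((F i).filter (fun e => ¬ col e = true)).card = (F i).card := by
      simpa using Finset.card_filter_add_card_filter_not
        (s := F i) (p := fun e => col e = true)
    have hb := hBlue i
    have hf := hFcard i
    show s - (n - 1) ≤ ((F i).filter (fun e => col e = true)).card
    omega
  have hRedsub : ∀ i, Red i ⊆ R.edgeFinset := by
    intro i e he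
    rw [Finset.mem_filter, hFmem] at he
    have hedge : e ∈ G.edgeSet := (hM i).1.1 he.1
    rw [SimpleGraph.mem_edgeFinset]
    induction e using Sym2.ind with
    | _ x y =>
      rw [SimpleGraph.mem_edgeSet] at hedge ⊢
      exact ⟨hedge, he.2⟩
  have hReddisj : ∀ (i : Fin t), i ∈ Finset.univ → ∀ (j : Fin t), j ∈ Finset.univ →
      i ≠ j → Disjoint (Red i) (Red j) := by
    intro i _ j _ hij
    rw [Finset.disjoint_left]
    intro e hei hej
    rw [Finset.mem_filter, hFmem] at hei hej
    exact Set.disjoint_left.mp (hdisj i j hij) hei.1 hej.1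
  have hsum2 : ∑ i : Fin t, (Red i).card ≤ R.edgeFinset.card := by
    rw [← Finset.card_biUnion hReddisj]
    apply Finset.card_le_card
    intro e he
    rw [Finset.mem_biUnion] at he
    obtain ⟨i, _, hei⟩ := he
    exact hRedsub i hei
  have hlower : t * (s - (n - 1)) ≤ ∑ i : Fin t, (Red i).card := by
    calc t * (s - (n - 1)) = ∑ _i : Fin t, (s - (n - 1)) := by
          rw [Finset.sum_const, Finset.card_univ, Fintype.card_fin, smul_eq_mul]
      _ ≤ ∑ i : Fin t, (Red i).card := Finset.sum_le_sum (fun i _ => hRedcard i)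
  -- numeric facts from the reals
  have hc0 : (0:ℝ) < c := by linarith
  have hts : t * s = N * n := by
    have hr : ((t * s : ℕ) : ℝ) = ((N * n : ℕ) : ℝ) := by
      push_cast
      rw [ht, hs]
      field_simp
    exact_mod_cast hr
  have h2t : 2 * t ≤ N := by
    have hr : ((2 * t : ℕ) : ℝ) ≤ ((N : ℕ) : ℝ) := by
      push_cast
      rw [ht]
      have hdd : (N:ℝ)/c ≤ (N:ℝ)/2 :=
        div_le_div_of_nonneg_left (Nat.cast_nonneg N) two_pos hc
      linarith
    exact_mod_cast hr
  have h2n : 2 * n ≤ s := by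
    have hr : ((2 * n : ℕ) : ℝ) ≤ ((s : ℕ) : ℝ) := by
      push_cast
      rw [hs]
      nlinarith [Nat.cast_nonneg (α := ℝ) n]
    exact_mod_cast hr
  -- combine
  obtain ⟨m, rfl⟩ : ∃ m, n = m + 1 := ⟨n - 1, by omega⟩
  have hm : m + 1 - 1 = m := by omega
  rw [hm] at hRedge hlower
  obtain ⟨k, hk⟩ : ∃ k, s = m + k := ⟨s - m, by omega⟩
  have hsk : s - m = k := by omega
  rw [hsk] at hlower
  have key : 2 * (t * k) ≤ N * m := by
    calc 2 * (t * k) ≤ 2 * R.edgeFinset.card := by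
          have := le_trans hlower hsum2
          omega
      _ ≤ N * m := hRedge
  have a1 : 2 * (t * m) ≤ N * m := by
    calc 2 * (t * m) = (2 * t) * m := by ring
      _ ≤ N * m := Nat.mul_le_mul_right m h2t
  have a3 : 2 * (t * m) + 2 * (t * k) = 2 * (N * (m + 1)) := by
    rw [← hts, hk]; ring
  have : 2 * (N * (m + 1)) ≤ N * m + N * m := by omega
  nlinarith
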